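/- Let n be a positive integer with n > 44, k = ⌈log₃ n⌉, and m = 2^r · t where r ≥ 2 is an integer and t ≥ 5 is odd, with n ≤ m < 3^k < 3n. Then there exist 1 ≤ a < b ≤ n such that b³ + b ≡ a³ + a (mod m). -/

import Mathlib

/-- Hensel-style lifting: for odd `t`, the quadratic `3a²+3at+t²+1` has a root
modulo every power of 2 (note it is always even, and the derivative `6a+3t` is odd). -/
lemma stmt_12_aux (t : ℕ) (ht : Odd t) :
    ∀ j : ℕ, ∃ a : ℕ, 2 ^ (j + 1) ∣ 3 * a ^ 2 + 3 * a * t + t ^ 2 + 1 := by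
  obtain ⟨s, hs⟩ := ht
  intro j
  induction j with
  | zero =>
    exact ⟨0, ⟨2 * s ^ 2 + 2 * s + 1, by subst hs; ring⟩⟩
  | succ j ih =>
    obtain ⟨a, w, hw⟩ := ih
    rcases Nat.even_or_odd w with ⟨w', hw'⟩ | ⟨w', hw'⟩
    · exact ⟨a, w', by rw [hw, hw', pow_succ]; ring⟩
    · refine ⟨a + 2 ^ (j + 1), ?_⟩
      have hkey : 3 * (a + 2 ^ (j + 1)) ^ 2 + 3 * (a + 2 ^ (j + 1)) * t + t ^ 2 + 1
          = (3 * a ^ 2 + 3 * a * t + t ^ 2 + 1)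
            + 2 ^ (j + 1) * (6 * a + 3 * t + 3 * 2 ^ (j + 1)) := by ring
      rw [hkey, hw, ← Nat.mul_add]
      -- the second factor is even
      have h2j : ∃ c, 2 ^ (j + 1) = 2 * c := ⟨2 ^ j, by rw [pow_succ]; ring⟩
      obtain ⟨c, hc⟩ := h2j
      have heven : ∃ y, w + (6 * a + 3 * t + 3 * 2 ^ (j + 1)) = 2 * y := by
        rw [hc, hs, hw']
        exact ⟨w' + 3 * a + 3 * s + 3 * c + 2, by ring⟩
      obtain ⟨y, hy⟩ := heven
      exact ⟨y, by rw [hy, pow_succ]; ring⟩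

theorem stmt_12 (n k m r t : ℕ) (hn : 44 < n) (hk : k = ⌈Real.logb 3 n⌉₊)
    (hr : 2 ≤ r) (ht : 5 ≤ t) (htodd : Odd t)
    (hm : m = 2 ^ r * t) (h1 : n ≤ m) (h2 : m < 3 ^ k) (h3 : 3 ^ k < 3 * n) :
    ∃ a b : ℕ, 1 ≤ a ∧ a < b ∧ b ≤ n ∧ a ^ 3 + a ≡ b ^ 3 + b [MOD m] := by
  have hm3n : m < 3 * n := lt_trans h2 h3
  by_cases hsmall : 2 ^ r * t ≤ 44
  · -- impossible: n ≤ m ≤ 44 < n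
    have : n ≤ 44 := le_trans (hm ▸ h1) hsmall
    omega
  push_neg at hsmall
  -- key size inequality: 3·2^r + 3t ≤ 2^r · t
  have hkey : 3 * 2 ^ r + 3 * t ≤ 2 ^ r * t := by
    rcases Nat.lt_or_ge r 3 with hr3 | hr3
    · -- r = 2
      have hr2 : r = 2 := by omega
      subst hr2
      norm_num at hsmall ⊢
      omega
    · have h8 : (8 : ℕ) ≤ 2 ^ r := by
        calc (8 : ℕ) = 2 ^ 3 := by norm_num
        _ ≤ 2 ^ r := Nat.pow_le_pow_right (by norm_num) hr3
      have hZ : (3 * 2 ^ r + 3 * t : ℤ) ≤ (2 ^ r : ℕ) * t := by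
        have h8' : (8 : ℤ) ≤ ((2 ^ r : ℕ) : ℤ) := by exact_mod_cast h8
        have ht' : (5 : ℤ) ≤ (t : ℤ) := by exact_mod_cast ht
        push_cast
        nlinarith [mul_nonneg (sub_nonneg.mpr h8') (sub_nonneg.mpr ht')]
      exact_mod_cast hZ
  have hmge : 3 * 2 ^ r + 3 * t ≤ m := hm ▸ hkey
  have hbound : 2 ^ r + t < n := by omega
  -- get a root of the quadratic mod 2^r
  obtain ⟨a, hdvd⟩ := stmt_12_aux t htodd (r - 1)
  have hr1 : r - 1 + 1 = r := by omega
  rw [hr1] at hdvd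
  have hpos : 0 < 2 ^ r := Nat.pow_pos (by norm_num)
  -- reduce a to the range (0, 2^r]
  set A : ℕ := if a % 2 ^ r = 0 then 2 ^ r else a % 2 ^ r with hA
  have hAa : A ≡ a [MOD 2 ^ r] := by
    rw [hA]
    split_ifs with h0
    · calc (2 ^ r : ℕ) ≡ 0 [MOD 2 ^ r] := (Nat.modEq_zero_iff_dvd).mpr dvd_rfl
      _ ≡ a % 2 ^ r [MOD 2 ^ r] := by rw [h0]
      _ ≡ a [MOD 2 ^ r] := Nat.mod_modEq a (2 ^ r)
    · exact Nat.mod_modEq a (2 ^ r)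
  have hA1 : 1 ≤ A := by
    rw [hA]; split_ifs with h0
    · exact hpos
    · omega
  have hA2 : A ≤ 2 ^ r := by
    rw [hA]; split_ifs with h0
    · exact le_refl _
    · exact le_of_lt (Nat.mod_lt a hpos)
  -- transfer divisibility to A
  have hdvdA : 2 ^ r ∣ 3 * A ^ 2 + 3 * A * t + t ^ 2 + 1 := by
    have hc : 3 * A ^ 2 + 3 * A * t + t ^ 2 + 1
        ≡ 3 * a ^ 2 + 3 * a * t + t ^ 2 + 1 [MOD 2 ^ r] :=
      ((((hAa.pow 2).mul_left 3).add ((hAa.mul_left 3).mul_right t)).add_right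
        (t ^ 2)).add_right 1
    have h0 : 3 * a ^ 2 + 3 * a * t + t ^ 2 + 1 ≡ 0 [MOD 2 ^ r] :=
      (Nat.modEq_zero_iff_dvd).mpr hdvd
    exact (Nat.modEq_zero_iff_dvd).mp (hc.trans h0)
  refine ⟨A, A + t, hA1, by omega, by omega, ?_⟩
  have hle : A ^ 3 + A ≤ (A + t) ^ 3 + (A + t) := by
    have := Nat.pow_le_pow_left (Nat.le_add_right A t) 3
    omega
  rw [Nat.modEq_iff_dvd' hle]
  have heq : (A + t) ^ 3 + (A + t) = (A ^ 3 + A) + t * (3 * A ^ 2 + 3 * A * t + t ^ 2 + 1) := by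
    ring
  rw [heq, Nat.add_sub_cancel_left]
  obtain ⟨c, hc⟩ := hdvdA
  exact ⟨c, by rw [hc, hm]; ring⟩
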